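/- Let P = {p_1 < p_2 < ⋯ < p_k} ⊆ [n], let N be the set of the k + 1 smallest positive integers not in P, let σ : P ∪ N → [2k+1] be the unique order-preserving bijection, and let P' = σ(P). Then the number of orderings ω of P for which some π ∈ S_n has Pin(π) = P and ord_P(π) = ω equals the number of orderings ω' of P' for which some π' ∈ S_{2k+1} has Pin(π') = P' and ord_{P'}(π') = ω'. -/

import Mathlib

/-- The pinnacle set of a finite sequence `w` (given as a list): the set of values `w t`
at interior positions `t` with `w (t-1) < w t > w (t+1)`. -/
def pinSet (w : List ℕ) : Finset ℕ :=
  (((List.range w.length).filter (fun t =>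
      decide (0 < t ∧ t + 1 < w.length ∧
        w.getD (t - 1) 0 < w.getD t 0 ∧ w.getD (t + 1) 0 < w.getD t 0))).map
    (fun t => w.getD t 0)).toFinset

/-- `ordIn S π` is the subsequence of the list `π` consisting of the entries lying in `S`. -/
def ordIn (S : Finset ℕ) (π : List ℕ) : List ℕ :=
  π.filter (fun x => decide (x ∈ S))

/-- The set of admissible orderings of `P` with respect to permutations of `{1, …, n}`:
orderings `ω` of `P` for which some permutation `π` of `{1, …, n}` has pinnacle set `P`
and the entries of `P` appear in `π` in the order `ω`. -/
def admissibleOrderings (n : ℕ) (P : Finset ℕ) : Set (List ℕ) :=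
  {ω | ω.Nodup ∧ ω.toFinset = P ∧
    ∃ π : List ℕ, π.Perm (List.range' 1 n) ∧ pinSet π = P ∧ ordIn P π = ω}

def IsPin (w : List ℕ) (t : ℕ) : Prop :=
  0 < t ∧ t + 1 < w.length ∧ w.getD (t - 1) 0 < w.getD t 0 ∧ w.getD (t + 1) 0 < w.getD t 0

lemma mem_pinSet {w : List ℕ} {v : ℕ} :
    v ∈ pinSet w ↔ ∃ t, IsPin w t ∧ w.getD t 0 = v := by
  simp only [pinSet, IsPin, List.mem_toFinset, List.mem_map, List.mem_filter, List.mem_range,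
    decide_eq_true_eq]
  constructor
  · rintro ⟨t, ⟨ht, h⟩, rfl⟩
    exact ⟨t, h, rfl⟩
  · rintro ⟨t, h, rfl⟩
    exact ⟨t, ⟨by omega, h⟩, rfl⟩

lemma not_isPin_succ {w : List ℕ} {t : ℕ} (h : IsPin w t) : ¬ IsPin w (t + 1) := by
  rintro ⟨-, -, h1, -⟩
  simp only [Nat.add_sub_cancel] at h1
  exact absurd h.2.2.2 (by omega)

lemma not_isPin_pred {w : List ℕ} {t : ℕ} (h : IsPin w t) : ¬ IsPin w (t - 1) := by
  rintro ⟨h0, -, -, h1⟩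
  have : t - 1 + 1 = t := by omega
  rw [this] at h1
  exact absurd h.2.2.1 (by omega)

def inter : List ℕ → List ℕ → List ℕ
  | [], _ => []
  | a :: _, [] => [a]
  | a :: d, q :: w => a :: q :: inter d w

lemma inter_perm : ∀ (d w : List ℕ), d.length = w.length + 1 → (inter d w).Perm (d ++ w)
  | [], w => by intro h; simp at h
  | a :: d, [] => by
      intro h
      simp at h
      subst h
      simp [inter]
  | a :: d, q :: w => by
      intro h
      simp only [List.length_cons] at h
      have ih := inter_perm d w (by omega)
      simp only [inter, List.cons_append]
      exact ((ih.cons q).trans List.perm_middle.symm).cons a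

lemma inter_length {d w : List ℕ} (h : d.length = w.length + 1) :
    (inter d w).length = d.length + w.length := by
  rw [(inter_perm d w h).length_eq, List.length_append]

lemma inter_getD_even : ∀ (d w : List ℕ), d.length = w.length + 1 → ∀ i < d.length,
    (inter d w).getD (2 * i) 0 = d.getD i 0
  | [], w => by intro h; simp at h
  | a :: d, [] => by
      intro h i hi
      simp at h
      subst h
      simp at hi
      obtain rfl : i = 0 := by omega
      simp [inter]
  | a :: d, q :: w => by
      intro h i hi
      simp only [List.length_cons] at h hi
      match i with
      | 0 => simp [inter]
      | i + 1 =>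
        have ih := inter_getD_even d w (by omega) i (by omega)
        have : 2 * (i + 1) = (2 * i) + 1 + 1 := by ring
        rw [this]
        simpa [inter] using ih

lemma inter_getD_odd : ∀ (d w : List ℕ), d.length = w.length + 1 → ∀ i < w.length,
    (inter d w).getD (2 * i + 1) 0 = w.getD i 0
  | [], w => by intro h; simp at h
  | a :: d, [] => by intro h i hi; simp at hi
  | a :: d, q :: w => by
      intro h i hi
      simp only [List.length_cons] at h hi
      match i with
      | 0 => simp [inter]
      | i + 1 =>
        have ih := inter_getD_odd d w (by omega) i (by omega)
        have : 2 * (i + 1) + 1 = (2 * i + 1) + 1 + 1 := by ring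
        rw [this]
        simpa [inter] using ih

lemma inter_filter (p : ℕ → Bool) : ∀ (d w : List ℕ), d.length = w.length + 1 →
    (∀ x ∈ d, p x = false) → (∀ x ∈ w, p x = true) → (inter d w).filter p = w
  | [], w => by intro h; simp at h
  | a :: d, [] => by
      intro h hd hw
      simp [inter, hd a (by simp)]
  | a :: d, q :: w => by
      intro h hd hw
      simp only [List.length_cons] at h
      have ih := inter_filter p d w (by omega) (fun x hx => hd x (by simp [hx]))
        (fun x hx => hw x (by simp [hx]))
      simp [inter, hd a (by simp), hw q (by simp), ih]

def goodD (n : ℕ) (P : Finset ℕ) (ω : List ℕ) : Prop :=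
  ∃ d : List ℕ, d.length = ω.length + 1 ∧ d.Nodup ∧
    (∀ x ∈ d, 1 ≤ x ∧ x ≤ n ∧ x ∉ P) ∧
    ∀ i < ω.length, d.getD i 0 < ω.getD i 0 ∧ d.getD (i + 1) 0 < ω.getD i 0

lemma toFinset_range' (n : ℕ) : (List.range' 1 n).toFinset = Finset.Icc 1 n := by
  ext x
  simp only [List.mem_toFinset, List.mem_range', Finset.mem_Icc]
  constructor
  · rintro ⟨i, hi, rfl⟩; omega
  · rintro ⟨h1, h2⟩; exact ⟨x - 1, by omega, by omega⟩

lemma mem_adm_of_goodD {n : ℕ} {P : Finset ℕ} {ω : List ℕ}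
    (hP : P ⊆ Finset.Icc 1 n) (hnd : ω.Nodup) (htf : ω.toFinset = P)
    (hg : goodD n P ω) : ω ∈ admissibleOrderings n P := by
  obtain ⟨d, hdl, hdnd, hdmem, hdlt⟩ := hg
  set k := ω.length with hk
  have hPcard : P.card = k := by rw [← htf, List.toFinset_card_of_nodup hnd]
  -- auxiliary sets
  set D : Finset ℕ := d.toFinset with hD
  have hDcard : D.card = k + 1 := by rw [hD, List.toFinset_card_of_nodup hdnd, hdl]
  have hDP : Disjoint D P := by
    rw [Finset.disjoint_left]
    intro x hx
    exact (hdmem x (List.mem_toFinset.mp hx)).2.2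
  have hsub : P ∪ D ⊆ Finset.Icc 1 n := by
    intro x hx
    rcases Finset.mem_union.mp hx with h | h
    · exact hP h
    · obtain ⟨h1, h2, _⟩ := hdmem x (List.mem_toFinset.mp h)
      exact Finset.mem_Icc.mpr ⟨h1, h2⟩
  have hcardPD : (P ∪ D).card = 2 * k + 1 := by
    rw [Finset.card_union_of_disjoint hDP.symm, hPcard, hDcard]; omega
  have hn2k : 2 * k + 1 ≤ n := by
    have := Finset.card_le_card hsub
    simpa [hcardPD] using this
  set rest : List ℕ := (Finset.Icc 1 n \ (P ∪ D)).sort (· ≤ ·) with hrest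
  have hrest_len : rest.length = n - (2 * k + 1) := by
    rw [hrest, Finset.length_sort, Finset.card_sdiff_of_subset hsub, hcardPD, Nat.card_Icc]
    omega
  have hrest_mem : ∀ x ∈ rest, x ∈ Finset.Icc 1 n \ (P ∪ D) := by
    intro x hx; rwa [hrest, Finset.mem_sort] at hx
  set π : List ℕ := inter d ω ++ rest with hπ
  have hil : (inter d ω).length = 2 * k + 1 := by rw [inter_length hdl, hdl]; omega
  have hπlen : π.length = n := by
    rw [hπ, List.length_append, hil, hrest_len]; omega
  -- getD facts
  have hget_lo : ∀ t < 2 * k + 1, π.getD t 0 = (inter d ω).getD t 0 := by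
    intro t ht
    rw [hπ]; exact List.getD_append _ _ _ _ (by omega)
  have hget_hi : ∀ t, 2 * k + 1 ≤ t → π.getD t 0 = rest.getD (t - (2 * k + 1)) 0 := by
    intro t ht
    rw [hπ, List.getD_append_right _ _ _ _ (by omega), hil]
  have hget_even : ∀ i < k + 1, π.getD (2 * i) 0 = d.getD i 0 := by
    intro i hi
    rw [hget_lo _ (by omega), inter_getD_even d ω hdl i (by omega)]
  have hget_odd : ∀ i < k, π.getD (2 * i + 1) 0 = ω.getD i 0 := by
    intro i hi
    rw [hget_lo _ (by omega), inter_getD_odd d ω hdl i (by omega)]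
  -- nodup
  have hinterp := inter_perm d ω hdl
  have hπnd : π.Nodup := by
    rw [hπ, List.nodup_append]
    refine ⟨hinterp.nodup_iff.mpr ?_, (Finset.Icc 1 n \ (P ∪ D)).sort_nodup _, ?_⟩
    · rw [List.nodup_append]
      refine ⟨hdnd, hnd, fun x hx y hx2 hxy => ?_⟩
      subst hxy
      exact (hdmem x hx).2.2 (htf ▸ List.mem_toFinset.mpr hx2)
    · intro x hx y hx2 hxy
      subst hxy
      have hx' : x ∈ P ∪ D := by
        have hmem := (List.Perm.mem_iff hinterp).mp hx
        rcases List.mem_append.mp hmem with h | h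
        · exact Finset.mem_union_right _ (List.mem_toFinset.mpr h)
        · exact Finset.mem_union_left _ (htf ▸ List.mem_toFinset.mpr h)
      have := hrest_mem x hx2
      rw [Finset.mem_sdiff] at this
      exact this.2 hx'
  have hπtf : π.toFinset = Finset.Icc 1 n := by
    rw [hπ, List.toFinset_append, List.toFinset_eq_of_perm _ _ hinterp, List.toFinset_append, htf,
      hrest, Finset.sort_toFinset, Finset.union_comm d.toFinset P]
    exact Finset.union_sdiff_of_subset hsub
  have hπperm : π.Perm (List.range' 1 n) := by
    refine List.perm_of_nodup_nodup_toFinset_eq hπnd List.nodup_range' ?_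
    rw [hπtf, toFinset_range']
  have hpin : pinSet π = P := by
    ext v
    rw [mem_pinSet]
    constructor
    · rintro ⟨t, hpint, rfl⟩
      obtain ⟨ht0, ht1, hl, hr⟩ := hpint
      rw [hπlen] at ht1
      by_cases hcase : t < 2 * k + 1
      · rcases Nat.even_or_odd t with ⟨i, hi⟩ | ⟨i, hi⟩
        · exfalso
          have hL : π.getD (t - 1) 0 = ω.getD (i - 1) 0 := by
            have h : t - 1 = 2 * (i - 1) + 1 := by omega
            rw [h]; exact hget_odd _ (by omega)
          have hT : π.getD t 0 = d.getD i 0 := by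
            have h : t = 2 * i := by omega
            rw [h]; exact hget_even _ (by omega)
          have h2 := (hdlt (i - 1) (by omega)).2
          have heq : i - 1 + 1 = i := by omega
          rw [heq] at h2
          rw [hL, hT] at hl
          omega
        · have hik : i < k := by omega
          have hT : π.getD t 0 = ω.getD i 0 := by
            have h2 : t = 2 * i + 1 := by omega
            rw [h2]; exact hget_odd _ hik
          rw [hT, ← htf]
          refine List.mem_toFinset.mpr ?_
          rw [List.getD_eq_getElem ω 0 (by omega : i < ω.length)]
          exact List.getElem_mem _
      · exfalso
        push_neg at hcase
        have hj : t - (2 * k + 1) + 1 < rest.length := by omega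
        have h1 : π.getD t 0 = rest.getD (t - (2 * k + 1)) 0 := hget_hi t hcase
        have h2 : π.getD (t + 1) 0 = rest.getD (t - (2 * k + 1) + 1) 0 := by
          rw [hget_hi (t + 1) (by omega)]; congr 1; omega
        have hsorted : List.Pairwise (· < ·) rest := (Finset.sortedLT_sort _).pairwise
        have hlt : rest.getD (t - (2 * k + 1)) 0 < rest.getD (t - (2 * k + 1) + 1) 0 := by
          rw [List.getD_eq_getElem _ _ (by omega), List.getD_eq_getElem _ _ hj]
          exact List.pairwise_iff_getElem.mp hsorted _ _ (by omega) hj (by omega)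
        rw [h1, h2] at hr
        omega
    · intro hv
      have hvω : v ∈ ω := List.mem_toFinset.mp (htf ▸ hv)
      obtain ⟨i, hik, hvi⟩ := List.mem_iff_getElem.mp hvω
      have hik' : i < k := hik
      refine ⟨2 * i + 1, ⟨by omega, ?_, ?_, ?_⟩, ?_⟩
      · rw [hπlen]; omega
      · have hL : π.getD (2 * i + 1 - 1) 0 = d.getD i 0 := by
          have h : 2 * i + 1 - 1 = 2 * i := by omega
          rw [h]; exact hget_even _ (by omega)
        rw [hL, hget_odd _ hik']
        exact (hdlt i hik').1
      · have hR : π.getD (2 * i + 1 + 1) 0 = d.getD (i + 1) 0 := by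
          have h : 2 * i + 1 + 1 = 2 * (i + 1) := by omega
          rw [h]; exact hget_even _ (by omega)
        rw [hR, hget_odd _ hik']
        exact (hdlt i hik').2
      · rw [hget_odd _ hik', List.getD_eq_getElem ω 0 hik]
        exact hvi
  have hord : ordIn P π = ω := by
    rw [hπ]
    unfold ordIn
    rw [List.filter_append]
    have h1 : (inter d ω).filter (fun x => decide (x ∈ P)) = ω := by
      refine inter_filter _ d ω hdl ?_ ?_
      · intro x hx; simpa using (hdmem x hx).2.2
      · intro x hx; simpa using htf ▸ List.mem_toFinset.mpr hx
    have h2 : rest.filter (fun x => decide (x ∈ P)) = [] := by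
      rw [List.filter_eq_nil_iff]
      intro x hx
      have h3 := (Finset.mem_sdiff.mp (hrest_mem x hx)).2
      simp only [decide_eq_true_eq]
      exact fun hxP => h3 (Finset.mem_union_left _ hxP)
    rw [h1, h2, List.append_nil]
  exact ⟨hnd, htf, π, hπperm, hpin, hord⟩

lemma filter_eq_map_range : ∀ (l : List ℕ) (p : ℕ → Bool),
    l.filter p = ((List.range l.length).filter (fun t => p (l.getD t 0))).map
      (fun t => l.getD t 0)
  | [], p => by simp
  | a :: l, p => by
    rw [List.length_cons, List.range_succ_eq_map]
    by_cases hp : p a <;>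
      simp [List.filter_cons, hp, List.filter_map, List.map_map, Function.comp_def,
        filter_eq_map_range l p]

lemma goodD_of_mem_adm {n : ℕ} {P : Finset ℕ} {ω : List ℕ} (hne : ω ≠ [])
    (h : ω ∈ admissibleOrderings n P) : goodD n P ω := by
  obtain ⟨hnd, htf, π, hperm, hpin, hord⟩ := h
  have hπnd : π.Nodup := (List.Perm.nodup_iff hperm).mpr List.nodup_range'
  set L := π.length with hL
  set g : ℕ → ℕ := fun t => π.getD t 0 with hg
  set T : List ℕ := (List.range L).filter (fun t =>
      decide (0 < t ∧ t + 1 < π.length ∧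
        π.getD (t - 1) 0 < π.getD t 0 ∧ π.getD (t + 1) 0 < π.getD t 0)) with hT
  have hpsT : pinSet π = (T.map g).toFinset := rfl
  have hmemT : ∀ t, t ∈ T ↔ t < L ∧ IsPin π t := by
    intro t
    rw [hT, List.mem_filter, List.mem_range]
    simp [IsPin]
  -- getD is injective on positions
  have hinj : ∀ s t, s < L → t < L → π.getD s 0 = π.getD t 0 → s = t := by
    intro s t hs ht hst
    rw [List.getD_eq_getElem _ _ hs, List.getD_eq_getElem _ _ ht] at hst
    exact (List.Nodup.getElem_inj_iff hπnd).mp hst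
  -- values at non-pin positions are not in P
  have hnonpinP : ∀ s, s < L → ¬ IsPin π s → π.getD s 0 ∉ P := by
    intro s hs hnp hmem
    rw [← hpin, mem_pinSet] at hmem
    obtain ⟨t, ht, hgt⟩ := hmem
    have htL : t < L := by have := ht.2.1; omega
    exact hnp (hinj s t hs htL hgt.symm ▸ ht)
  -- ω is the list of pinnacle values
  have hωT : ω = T.map g := by
    rw [← hord]
    unfold ordIn
    rw [filter_eq_map_range π (fun x => decide (x ∈ P))]
    congr 1
    rw [hT]
    apply List.filter_congr
    intro t ht
    rw [List.mem_range] at ht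
    rw [decide_eq_decide]
    constructor
    · intro hmem
      rw [← hpin, mem_pinSet] at hmem
      obtain ⟨s, hs, hgs⟩ := hmem
      have hsL : s < L := by have := hs.2.1; omega
      have hst : s = t := hinj s t hsL ht hgs
      subst hst
      exact ⟨hs.1, hs.2.1, hs.2.2.1, hs.2.2.2⟩
    · intro hpint
      have hp : IsPin π t := ⟨hpint.1, hpint.2.1, hpint.2.2.1, hpint.2.2.2⟩
      have : π.getD t 0 ∈ pinSet π := mem_pinSet.mpr ⟨t, hp, rfl⟩
      rwa [hpin] at this
  set k := ω.length with hk
  have hk1 : 1 ≤ k := by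
    rcases ω with _ | ⟨a, ω'⟩
    · exact absurd rfl hne
    · simp [hk]
  have hTlen : T.length = k := by rw [hk, hωT, List.length_map]
  have hTpin : ∀ i < k, IsPin π (T.getD i 0) := by
    intro i hi
    have : T.getD i 0 ∈ T := by
      rw [List.getD_eq_getElem _ _ (by omega : i < T.length)]
      exact List.getElem_mem _
    exact ((hmemT _).mp this).2
  have hTmono : ∀ i j, i < j → j < k → T.getD i 0 < T.getD j 0 := by
    intro i j hij hj
    have hpw : T.Pairwise (· < ·) :=
      List.Pairwise.sublist List.filter_sublist List.pairwise_lt_range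
    rw [List.getD_eq_getElem _ _ (by omega : i < T.length),
      List.getD_eq_getElem _ _ (by omega : j < T.length)]
    exact List.pairwise_iff_getElem.mp hpw i j (by omega) (by omega) hij
  have hωi : ∀ i < k, ω.getD i 0 = π.getD (T.getD i 0) 0 := by
    intro i hi
    conv_lhs => rw [hωT]
    rw [List.getD_eq_getElem _ _ (by rw [List.length_map, hTlen]; omega),
      List.getElem_map, List.getD_eq_getElem _ _ (by omega : i < T.length)]
  have hgap : ∀ i, i + 1 < k → T.getD i 0 + 2 ≤ T.getD (i + 1) 0 := by
    intro i hi
    have h1 := hTmono i (i + 1) (by omega) hi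
    by_contra hcon
    have : T.getD (i + 1) 0 = T.getD i 0 + 1 := by omega
    exact not_isPin_succ (hTpin i (by omega)) (this ▸ hTpin (i + 1) hi)
  -- the choice of flanking positions
  set c : ℕ → ℕ := fun i =>
    if i = 0 then T.getD 0 0 - 1
    else if i = k then T.getD (k - 1) 0 + 1
    else if π.getD (T.getD (i - 1) 0 + 1) 0 ≤ π.getD (T.getD i 0 - 1) 0 then
      T.getD (i - 1) 0 + 1
    else T.getD i 0 - 1 with hc
  have hc0 : c 0 = T.getD 0 0 - 1 := by simp [hc]
  have hck : c k = T.getD (k - 1) 0 + 1 := by simp [hc, show k ≠ 0 by omega]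
  have hcmid : ∀ i, i ≠ 0 → i ≠ k →
      c i = if π.getD (T.getD (i - 1) 0 + 1) 0 ≤ π.getD (T.getD i 0 - 1) 0 then
        T.getD (i - 1) 0 + 1 else T.getD i 0 - 1 := by
    intro i h1 h2
    simp [hc, h1, h2]
  have hlo : ∀ i, 1 ≤ i → i ≤ k → T.getD (i - 1) 0 < c i := by
    intro i h1 h2
    by_cases hik : i = k
    · subst hik; rw [hck]; omega
    · rw [hcmid i (by omega) hik]
      split_ifs with hs
      · omega
      · have h3 := hgap (i - 1) (by omega)
        have heq : i - 1 + 1 = i := by omega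
        rw [heq] at h3
        omega
  have hhi : ∀ i, i < k → c i < T.getD i 0 := by
    intro i hik
    by_cases h0 : i = 0
    · subst h0
      rw [hc0]
      have := (hTpin 0 (by omega)).1
      omega
    · rw [hcmid i h0 (by omega)]
      split_ifs with hs
      · have h3 := hgap (i - 1) (by omega)
        have heq : i - 1 + 1 = i := by omega
        rw [heq] at h3
        omega
      · have := (hTpin i hik).1
        omega
  have hcL : ∀ i ≤ k, c i < L := by
    intro i hik
    by_cases h : i < k
    · have h1 := hhi i h
      have := (hTpin i h).2.1
      omega
    · have hik' : i = k := by omega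
      subst hik'
      rw [hck]
      have := (hTpin (k - 1) (by omega)).2.1
      omega
  have hnotpin : ∀ i ≤ k, ¬ IsPin π (c i) := by
    intro i hik
    by_cases h0 : i = 0
    · subst h0
      rw [hc0]
      exact not_isPin_pred (hTpin 0 (by omega))
    · by_cases hk' : i = k
      · subst hk'
        rw [hck]
        exact not_isPin_succ (hTpin (k - 1) (by omega))
      · rw [hcmid i h0 hk']
        split_ifs with hs
        · exact not_isPin_succ (hTpin (i - 1) (by omega))
        · exact not_isPin_pred (hTpin i (by omega))
  have hlt1 : ∀ i, i < k → π.getD (c i) 0 < π.getD (T.getD i 0) 0 := by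
    intro i hik
    by_cases h0 : i = 0
    · subst h0
      rw [hc0]
      exact (hTpin 0 (by omega)).2.2.1
    · rw [hcmid i h0 (by omega)]
      split_ifs with hs
      · calc π.getD (T.getD (i - 1) 0 + 1) 0 ≤ π.getD (T.getD i 0 - 1) 0 := hs
          _ < π.getD (T.getD i 0) 0 := (hTpin i hik).2.2.1
      · exact (hTpin i hik).2.2.1
  have hlt2 : ∀ i, 1 ≤ i → i ≤ k → π.getD (c i) 0 < π.getD (T.getD (i - 1) 0) 0 := by
    intro i h1 h2
    by_cases hk' : i = k
    · subst hk'
      rw [hck]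
      exact (hTpin (k - 1) (by omega)).2.2.2
    · rw [hcmid i (by omega) hk']
      split_ifs with hs
      · exact (hTpin (i - 1) (by omega)).2.2.2
      · push_neg at hs
        calc π.getD (T.getD i 0 - 1) 0 < π.getD (T.getD (i - 1) 0 + 1) 0 := hs
          _ < π.getD (T.getD (i - 1) 0) 0 := (hTpin (i - 1) (by omega)).2.2.2
  have hcmono : ∀ i j, i < j → j ≤ k → c i < c j := by
    intro i j hij hjk
    have h1 : c i < T.getD i 0 := hhi i (by omega)
    have h2 : T.getD (j - 1) 0 < c j := hlo j (by omega) hjk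
    have h3 : T.getD i 0 ≤ T.getD (j - 1) 0 := by
      by_cases h : i = j - 1
      · rw [h]
      · exact le_of_lt (hTmono i (j - 1) (by omega) (by omega))
    omega
  -- the witness list
  refine ⟨(List.range (k + 1)).map (fun i => π.getD (c i) 0), by simp [hk], ?_, ?_, ?_⟩
  · refine List.Nodup.map_on ?_ List.nodup_range
    intro x hx y hy hxy
    rw [List.mem_range] at hx hy
    rcases lt_trichotomy x y with h | h | h
    · exact absurd hxy (by
        have := hcmono x y h (by omega)
        exact fun he => absurd (hinj _ _ (hcL x (by omega)) (hcL y (by omega)) he) (by omega))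
    · exact h
    · exact absurd hxy.symm (by
        have := hcmono y x h (by omega)
        exact fun he => absurd (hinj _ _ (hcL y (by omega)) (hcL x (by omega)) he) (by omega))
  · intro x hx
    rw [List.mem_map] at hx
    obtain ⟨i, hi, rfl⟩ := hx
    rw [List.mem_range] at hi
    have hxπ : π.getD (c i) 0 ∈ π := by
      rw [List.getD_eq_getElem _ _ (hcL i (by omega))]
      exact List.getElem_mem _
    have hxr := (List.Perm.mem_iff hperm).mp hxπ
    rw [List.mem_range'] at hxr
    obtain ⟨m, hm, hx'⟩ := hxr
    exact ⟨by omega, by omega, hnonpinP _ (hcL i (by omega)) (hnotpin i (by omega))⟩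
  · intro i hik
    have hgd : ∀ j ≤ k, ((List.range (k + 1)).map (fun i => π.getD (c i) 0)).getD j 0
        = π.getD (c j) 0 := by
      intro j hj
      rw [List.getD_eq_getElem _ _ (by simp; omega), List.getElem_map, List.getElem_range]
    rw [hgd i (by omega), hgd (i + 1) (by omega), hωi i hik]
    refine ⟨hlt1 i hik, ?_⟩
    have := hlt2 (i + 1) (by omega) (by omega)
    simpa using this

section transfer


variable {n k : ℕ} {P N : Finset ℕ} {σ : ℕ → ℕ} {P' : Finset ℕ}

lemma goodD_forward (hk : P.card = k)
    (hNcard : N.card = k + 1) (hNpos : ∀ m ∈ N, 1 ≤ m) (hNP : ∀ m ∈ N, m ∉ P)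
    (hNsmall : ∀ m : ℕ, 1 ≤ m → m ∉ P → m ∉ N → ∀ m' ∈ N, m' < m)
    (hσbij : Set.BijOn σ ↑(P ∪ N) ↑(Finset.Icc 1 (2 * k + 1)))
    (hσmono : ∀ a ∈ P ∪ N, ∀ b ∈ P ∪ N, a < b → σ a < σ b)
    (hP' : P' = P.image σ)
    {ω : List ℕ} (hωP : ∀ x ∈ ω, x ∈ P) (hωlen : ω.length = k)
    (hg : goodD n P ω) : goodD (2 * k + 1) P' (ω.map σ) := by
  obtain ⟨d, hdl, hdnd, hdmem, hdlt⟩ := hg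
  set D : Finset ℕ := d.toFinset with hD
  set νs : List ℕ := N.sort (· ≤ ·) with hνs
  have hνlen : νs.length = k + 1 := by rw [hνs, Finset.length_sort, hNcard]
  have hνnd : νs.Nodup := N.sort_nodup _
  have hνsorted : List.Pairwise (· < ·) νs := (Finset.sortedLT_sort _).pairwise
  have hνmem : ∀ j < k + 1, νs.getD j 0 ∈ N := by
    intro j hj
    rw [List.getD_eq_getElem _ _ (by omega)]
    exact (Finset.mem_sort _).mp (List.getElem_mem _)
  set r : ℕ → ℕ := fun x => (D.filter (· < x)).card with hr
  have hrlt : ∀ x ∈ D, r x < k + 1 := by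
    intro x hx
    have h1 : D.filter (· < x) ⊂ D := by
      refine Finset.ssubset_iff_of_subset (Finset.filter_subset _ _) |>.mpr ?_
      exact ⟨x, hx, by simp⟩
    have h2 : D.card = k + 1 := by
      rw [hD, List.toFinset_card_of_nodup hdnd, hdl, hωlen]
    have h3 := Finset.card_lt_card h1
    rw [h2] at h3
    simp only [hr]
    omega
  have hrmono : ∀ x ∈ D, ∀ y ∈ D, x < y → r x < r y := by
    intro x hx y hy hxy
    refine Finset.card_lt_card ?_
    constructor
    · intro z hz
      rw [Finset.mem_filter] at hz ⊢
      exact ⟨hz.1, by have := hz.2; simp at this ⊢; omega⟩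
    · intro hsub
      have : x ∈ D.filter (· < x) := hsub (by simp [hx, hxy])
      simp at this
  have hkey : ∀ x ∈ D, νs.getD (r x) 0 ≤ x := by
    intro x hx
    set j := r x with hj
    have hjk : j < k + 1 := hrlt x hx
    have hcard : j + 1 ≤ (N.filter (· ≤ x)).card := by
      have hsub1 : insert x (D.filter (· < x)) ⊆ D.filter (· ≤ x) := by
        intro z hz
        rcases Finset.mem_insert.mp hz with rfl | hz
        · simp [hx]
        · rw [Finset.mem_filter] at hz ⊢
          exact ⟨hz.1, by have := hz.2; simp at this ⊢; omega⟩
      have hcard1 : j + 1 ≤ (D.filter (· ≤ x)).card := by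
        have := Finset.card_le_card hsub1
        rwa [Finset.card_insert_of_notMem (by simp)] at this
      by_cases hall : ∀ z ∈ D.filter (· ≤ x), z ∈ N
      · exact le_trans hcard1 (Finset.card_le_card (fun z hz => by
          rw [Finset.mem_filter] at hz ⊢
          exact ⟨hall z (Finset.mem_filter.mpr hz), hz.2⟩))
      · push_neg at hall
        obtain ⟨z, hz, hzN⟩ := hall
        rw [Finset.mem_filter] at hz
        have hzD := hz.1
        rw [hD, List.mem_toFinset] at hzD
        obtain ⟨hz1, _, hzP⟩ := hdmem z hzD
        have hNz := hNsmall z hz1 hzP hzN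
        have : N.filter (· ≤ x) = N := by
          refine Finset.filter_true_of_mem ?_
          intro m hm
          have := hNz m hm
          have := hz.2
          omega
        rw [this, hNcard]
        omega
    by_contra hcon
    push_neg at hcon
    have hsub : N.filter (· ≤ x) ⊆ (Finset.range j).image (fun i => νs.getD i 0) := by
      intro z hz
      rw [Finset.mem_filter] at hz
      have hzνs : z ∈ νs := (Finset.mem_sort _).mpr hz.1
      set idx := νs.idxOf z with hidx
      have hidxlt : idx < νs.length := List.idxOf_lt_length_iff.mpr hzνs
      have hzget : νs.getD idx 0 = z := by
        rw [List.getD_eq_getElem _ _ hidxlt]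
        exact List.getElem_idxOf hidxlt
      have hidxj : idx < j := by
        by_contra hcon2
        push_neg at hcon2
        have : νs.getD j 0 ≤ z := by
          rcases eq_or_lt_of_le hcon2 with h | h
          · rw [← hzget, ← h]
          · rw [← hzget, List.getD_eq_getElem _ _ (by omega), List.getD_eq_getElem _ _ hidxlt]
            exact le_of_lt (List.pairwise_iff_getElem.mp hνsorted _ _ _ _ h)
        have := hz.2
        omega
      exact Finset.mem_image.mpr ⟨idx, Finset.mem_range.mpr hidxj, hzget⟩
    have := Finset.card_le_card hsub
    have h2 := Finset.card_image_le (s := Finset.range j) (f := fun i => νs.getD i 0)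
    rw [Finset.card_range] at h2
    omega
  -- now build d'
  refine ⟨d.map (fun x => σ (νs.getD (r x) 0)), by simp [hdl], ?_, ?_, ?_⟩
  · refine List.Nodup.map_on ?_ hdnd
    intro x hx y hy hxy
    have hxD : x ∈ D := List.mem_toFinset.mpr hx
    have hyD : y ∈ D := List.mem_toFinset.mpr hy
    have hνx : νs.getD (r x) 0 ∈ N := hνmem _ (hrlt x hxD)
    have hνy : νs.getD (r y) 0 ∈ N := hνmem _ (hrlt y hyD)
    have hνeq : νs.getD (r x) 0 = νs.getD (r y) 0 := by
      refine hσbij.injOn ?_ ?_ hxy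
      · exact_mod_cast Finset.mem_coe.mpr (Finset.mem_union_right _ hνx)
      · exact_mod_cast Finset.mem_coe.mpr (Finset.mem_union_right _ hνy)
    have hreq : r x = r y := by
      have hrx : r x < νs.length := by rw [hνlen]; exact hrlt x hxD
      have hry : r y < νs.length := by rw [hνlen]; exact hrlt y hyD
      rw [List.getD_eq_getElem _ _ hrx, List.getD_eq_getElem _ _ hry] at hνeq
      exact (List.Nodup.getElem_inj_iff hνnd).mp hνeq
    rcases lt_trichotomy x y with h | h | h
    · exact absurd hreq (by have := hrmono x hxD y hyD h; omega)
    · exact h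
    · exact absurd hreq (by have := hrmono y hyD x hxD h; omega)
  · intro x' hx'
    rw [List.mem_map] at hx'
    obtain ⟨x, hx, rfl⟩ := hx'
    have hν : νs.getD (r x) 0 ∈ N := hνmem _ (hrlt x (List.mem_toFinset.mpr hx))
    have hImem : σ (νs.getD (r x) 0) ∈ Finset.Icc 1 (2 * k + 1) := by
      have := hσbij.mapsTo (Finset.mem_coe.mpr (Finset.mem_union_right _ hν))
      exact_mod_cast this
    rw [Finset.mem_Icc] at hImem
    refine ⟨hImem.1, hImem.2, ?_⟩
    rw [hP']
    intro hmem
    obtain ⟨p, hp, hpe⟩ := Finset.mem_image.mp hmem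
    have : νs.getD (r x) 0 = p := by
      refine hσbij.injOn ?_ ?_ hpe.symm
      · exact_mod_cast Finset.mem_coe.mpr (Finset.mem_union_right _ hν)
      · exact_mod_cast Finset.mem_coe.mpr (Finset.mem_union_left _ hp)
    exact hNP _ hν (this ▸ hp)
  · intro i hi
    rw [List.length_map] at hi
    have hgd : ∀ j, (hj : j < d.length) →
        (d.map (fun x => σ (νs.getD (r x) 0))).getD j 0 = σ (νs.getD (r d[j]) 0) := by
      intro j hj
      rw [List.getD_eq_getElem _ _ (by simpa using hj), List.getElem_map]
    have hω : ∀ j, (hj : j < ω.length) → (ω.map σ).getD j 0 = σ (ω.getD j 0) := by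
      intro j hj
      rw [List.getD_eq_getElem _ _ (by simpa using hj), List.getElem_map,
        List.getD_eq_getElem _ _ hj]
    have main : ∀ j, (hj : j < d.length) → d[j] < ω.getD i 0 →
        σ (νs.getD (r d[j]) 0) < σ (ω.getD i 0) := by
      intro j hj hlt
      have hjD : d[j] ∈ D := List.mem_toFinset.mpr (List.getElem_mem _)
      have hν : νs.getD (r d[j]) 0 ∈ N := hνmem _ (hrlt _ hjD)
      have hle : νs.getD (r d[j]) 0 ≤ d[j] := hkey _ hjD
      have hωiP : ω.getD i 0 ∈ P := by
        rw [List.getD_eq_getElem _ _ hi]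
        exact hωP _ (List.getElem_mem _)
      exact hσmono _ (Finset.mem_union_right _ hν) _ (Finset.mem_union_left _ hωiP)
        (by omega)
    obtain ⟨h1, h2⟩ := hdlt i hi
    constructor
    · rw [hgd i (by omega), hω i hi]
      refine main i (by omega) ?_
      rwa [List.getD_eq_getElem _ _ (by omega : i < d.length)] at h1
    · rw [hgd (i + 1) (by omega), hω i hi]
      refine main (i + 1) (by omega) ?_
      rwa [List.getD_eq_getElem _ _ (by omega : i + 1 < d.length)] at h2


lemma goodD_backward (hP : P ⊆ Finset.Icc 1 n) (hk1 : 1 ≤ k)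
    (hNpos : ∀ m ∈ N, 1 ≤ m) (hNP : ∀ m ∈ N, m ∉ P)
    (hσbij : Set.BijOn σ ↑(P ∪ N) ↑(Finset.Icc 1 (2 * k + 1)))
    (hσmono : ∀ a ∈ P ∪ N, ∀ b ∈ P ∪ N, a < b → σ a < σ b)
    (hP' : P' = P.image σ)
    {ω ω' : List ℕ} (hmap : ω.map σ = ω') (hωP : ∀ x ∈ ω, x ∈ P) (hωlen : ω.length = k)
    (hg : goodD (2 * k + 1) P' ω') : goodD n P ω := by
  obtain ⟨d', hdl, hdnd, hdmem, hdlt⟩ := hg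
  have hω'len : ω'.length = k := by rw [← hmap, List.length_map, hωlen]
  set τ : ℕ → ℕ := fun x' => Function.invFunOn σ ↑(P ∪ N) x' with hτ
  have hτfacts : ∀ x' ∈ d', τ x' ∈ N ∧ σ (τ x') = x' := by
    intro x' hx'
    obtain ⟨h1, h2, h3⟩ := hdmem x' hx'
    have hmem : x' ∈ (↑(Finset.Icc 1 (2 * k + 1)) : Set ℕ) := by
      simp only [Finset.coe_Icc, Set.mem_Icc]; exact ⟨h1, h2⟩
    have hex : ∃ a ∈ (↑(P ∪ N) : Set ℕ), σ a = x' := by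
      have := hσbij.surjOn hmem
      obtain ⟨a, ha, hae⟩ := this
      exact ⟨a, ha, hae⟩
    have hτmem : τ x' ∈ (↑(P ∪ N) : Set ℕ) := Function.invFunOn_mem hex
    have hτeq : σ (τ x') = x' := Function.invFunOn_eq hex
    have : τ x' ∉ P := by
      intro hp
      exact h3 (hP' ▸ Finset.mem_image.mpr ⟨τ x', hp, hτeq⟩)
    rcases Finset.mem_union.mp (Finset.mem_coe.mp hτmem) with h | h
    · exact absurd h this
    · exact ⟨h, hτeq⟩
  have hreflect : ∀ a ∈ N, ∀ b ∈ P, σ a < σ b → a < b := by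
    intro a ha b hb hab
    by_contra hcon
    push_neg at hcon
    rcases eq_or_lt_of_le hcon with h | h
    · subst h; omega
    · have := hσmono b (Finset.mem_union_left _ hb) a (Finset.mem_union_right _ ha) h
      omega
  have hωmem : ∀ i, (hi : i < ω.length) → ω.getD i 0 ∈ P := by
    intro i hi
    rw [List.getD_eq_getElem _ _ hi]
    exact hωP _ (List.getElem_mem _)
  have hω'get : ∀ i, (hi : i < ω.length) → ω'.getD i 0 = σ (ω.getD i 0) := by
    intro i hi
    rw [← hmap, List.getD_eq_getElem _ _ (by simpa using hi), List.getElem_map,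
      List.getD_eq_getElem _ _ hi]
  have hd'mem : ∀ i, (hi : i < d'.length) → d'.getD i 0 ∈ d' := by
    intro i hi
    rw [List.getD_eq_getElem _ _ hi]
    exact List.getElem_mem _
  refine ⟨d'.map τ, by simp [hdl, hω'len, hωlen], ?_, ?_, ?_⟩
  · refine List.Nodup.map_on ?_ hdnd
    intro x hx y hy hxy
    have h1 := (hτfacts x hx).2
    have h2 := (hτfacts y hy).2
    rw [← h1, ← h2, hxy]
  · intro x hx
    rw [List.mem_map] at hx
    obtain ⟨x', hx', rfl⟩ := hx
    obtain ⟨hN, heq⟩ := hτfacts x' hx'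
    refine ⟨hNpos _ hN, ?_, hNP _ hN⟩
    -- τ x' ≤ n : since τ x' < some element of P (flanking) — derive from inequalities
    -- find an index: x' = d'.getD i 0 for some i
    obtain ⟨i, hi, hxi⟩ := List.mem_iff_getElem.mp hx'
    have hilen : i < ω.length + 1 := by rw [hωlen, ← hω'len]; omega
    have hflank : (τ x' : ℕ) < if i < ω.length then ω.getD i 0 else ω.getD (i - 1) 0 := by
      split_ifs with hcase
      · have := (hdlt i (by omega)).1
        rw [List.getD_eq_getElem _ _ hi, hxi, hω'get i hcase] at this
        exact hreflect _ hN _ (hωmem i hcase) (by rw [heq]; exact this)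
      · have hieq : i = ω.length := by omega
        have hi1 : i - 1 < ω.length := by omega
        have := (hdlt (i - 1) (by rw [hω'len, ← hωlen]; omega)).2
        have hieq2 : i - 1 + 1 = i := by omega
        rw [hieq2, List.getD_eq_getElem _ _ hi, hxi, hω'get (i - 1) hi1] at this
        exact hreflect _ hN _ (hωmem (i - 1) hi1) (by rw [heq]; exact this)
    have hb : ∀ j, (hj : j < ω.length) → ω.getD j 0 ≤ n := by
      intro j hj
      have := hP (hωmem j hj)
      rw [Finset.mem_Icc] at this
      omega
    split_ifs at hflank with hcase
    · have := hb i hcase; omega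
    · have := hb (i - 1) (by omega); omega
  · intro i hi
    have hdlen : d'.length = ω.length + 1 := by rw [hdl, hω'len, hωlen]
    have hget : ∀ j, (hj : j < d'.length) → (d'.map τ).getD j 0 = τ (d'.getD j 0) := by
      intro j hj
      rw [List.getD_eq_getElem _ _ (by simpa using hj), List.getElem_map,
        List.getD_eq_getElem _ _ hj]
    have main : ∀ j, (hj : j < d'.length) → d'.getD j 0 < ω'.getD i 0 →
        τ (d'.getD j 0) < ω.getD i 0 := by
      intro j hj hlt
      obtain ⟨hN, heq⟩ := hτfacts _ (hd'mem j hj)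
      rw [hω'get i hi] at hlt
      exact hreflect _ hN _ (hωmem i hi) (by rw [heq]; exact hlt)
    have := hdlt i (by omega)
    constructor
    · rw [hget i (by omega)]
      exact main i (by omega) this.1
    · rw [hget (i + 1) (by omega)]
      exact main (i + 1) (by omega) this.2

end transfer

lemma map_injOn_list {σ : ℕ → ℕ} {P : Finset ℕ} (hinj : Set.InjOn σ ↑P) :
    ∀ (l1 : List ℕ), (∀ x ∈ l1, x ∈ P) → ∀ (l2 : List ℕ), (∀ x ∈ l2, x ∈ P) →
      l1.map σ = l2.map σ → l1 = l2
  | [], _, [], _, _ => rfl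
  | [], _, b :: l2, _, h => by simp at h
  | a :: l1, _, [], _, h => by simp at h
  | a :: l1, h1, b :: l2, h2, h => by
    simp only [List.map_cons, List.cons.injEq] at h
    have hab : a = b := hinj (by exact_mod_cast h1 a (by simp))
      (by exact_mod_cast h2 b (by simp)) h.1
    rw [hab, map_injOn_list hinj l1 (fun x hx => h1 x (by simp [hx])) l2
      (fun x hx => h2 x (by simp [hx])) h.2]

lemma exists_preimage_list {σ : ℕ → ℕ} {P P' : Finset ℕ} (hP' : P' = P.image σ) :
    ∀ (l' : List ℕ), (∀ x ∈ l', x ∈ P') → ∃ l : List ℕ, (∀ x ∈ l, x ∈ P) ∧ l.map σ = l'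
  | [], _ => ⟨[], by simp, by simp⟩
  | a :: l', h => by
    have ha := h a (by simp)
    rw [hP'] at ha
    obtain ⟨b, hb, hba⟩ := Finset.mem_image.mp ha
    obtain ⟨l, hl, hle⟩ := exists_preimage_list hP' l' (fun x hx => h x (by simp [hx]))
    refine ⟨b :: l, ?_, by simp [hle, hba]⟩
    intro x hx
    rcases List.mem_cons.mp hx with rfl | hx
    · exact hb
    · exact hl x hx

lemma adm_empty (n : ℕ) : admissibleOrderings n ∅ = {([] : List ℕ)} := by
  ext ω
  simp only [Set.mem_singleton_iff]
  constructor
  · rintro ⟨hnd, htf, -⟩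
    exact List.toFinset_eq_empty_iff ω |>.mp htf
  · rintro rfl
    refine ⟨List.nodup_nil, by simp, List.range' 1 n, List.Perm.refl _, ?_, by simp [ordIn]⟩
    ext v
    rw [mem_pinSet]
    simp only [Finset.notMem_empty, iff_false, not_exists]
    rintro t ⟨⟨ht0, ht1, -, hr⟩, -⟩
    rw [List.length_range'] at ht1
    rw [List.getD_eq_getElem _ _ (by rw [List.length_range']; omega),
      List.getD_eq_getElem _ _ (by rw [List.length_range']; omega),
      List.getElem_range', List.getElem_range'] at hr
    omega

theorem ordering_standardization (n k : ℕ) (P : Finset ℕ)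
    (hP : P ⊆ Finset.Icc 1 n) (hk : P.card = k)
    (N : Finset ℕ) (hNcard : N.card = k + 1) (hNpos : ∀ m ∈ N, 1 ≤ m)
    (hNP : ∀ m ∈ N, m ∉ P)
    (hNsmall : ∀ m : ℕ, 1 ≤ m → m ∉ P → m ∉ N → ∀ m' ∈ N, m' < m)
    (σ : ℕ → ℕ) (hσbij : Set.BijOn σ ↑(P ∪ N) ↑(Finset.Icc 1 (2 * k + 1)))
    (hσmono : ∀ a ∈ P ∪ N, ∀ b ∈ P ∪ N, a < b → σ a < σ b)
    (P' : Finset ℕ) (hP' : P' = P.image σ) :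
    (admissibleOrderings n P).ncard = (admissibleOrderings (2 * k + 1) P').ncard := by
  by_cases hk0 : k = 0
  · subst hk0
    have hPe : P = ∅ := Finset.card_eq_zero.mp hk
    have hP'e : P' = ∅ := by rw [hP', hPe]; simp
    rw [hPe, hP'e, adm_empty, adm_empty]
  · have hk1 : 1 ≤ k := by omega
    have hPsub : (↑P : Set ℕ) ⊆ ↑(P ∪ N) := by
      exact_mod_cast Finset.coe_subset.mpr Finset.subset_union_left
    have hP'sub : P' ⊆ Finset.Icc 1 (2 * k + 1) := by
      intro x hx
      rw [hP'] at hx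
      obtain ⟨p, hp, rfl⟩ := Finset.mem_image.mp hx
      exact_mod_cast hσbij.mapsTo (hPsub (by exact_mod_cast hp))
    have hP'card : P'.card = k := by
      rw [hP', Finset.card_image_of_injOn (hσbij.injOn.mono hPsub), hk]
    have hbij : Set.BijOn (List.map σ) (admissibleOrderings n P)
        (admissibleOrderings (2 * k + 1) P') := by
      refine ⟨?_, ?_, ?_⟩
      · intro ω hω
        obtain ⟨hnd, htf, -⟩ := id hω
        have hωP : ∀ x ∈ ω, x ∈ P := fun x hx => htf ▸ List.mem_toFinset.mpr hx
        have hωlen : ω.length = k := by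
          rw [← List.toFinset_card_of_nodup hnd, htf, hk]
        have hne : ω ≠ [] := by
          intro h
          rw [h] at hωlen
          simp at hωlen
          omega
        have hg := goodD_of_mem_adm hne hω
        have hg' := goodD_forward hk hNcard hNpos hNP hNsmall hσbij hσmono hP' hωP hωlen hg
        refine mem_adm_of_goodD hP'sub ?_ ?_ hg'
        · refine List.Nodup.map_on ?_ hnd
          intro x hx y hy hxy
          exact hσbij.injOn (hPsub (by exact_mod_cast hωP x hx))
            (hPsub (by exact_mod_cast hωP y hy)) hxy
        · rw [hP', ← htf]
          ext x
          simp
      · intro ω1 h1 ω2 h2 heq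
        refine map_injOn_list (hσbij.injOn.mono hPsub) ω1 ?_ ω2 ?_ heq
        · exact fun x hx => h1.2.1 ▸ List.mem_toFinset.mpr hx
        · exact fun x hx => h2.2.1 ▸ List.mem_toFinset.mpr hx
      · intro ω' hω'
        obtain ⟨hnd', htf', -⟩ := id hω'
        have hω'P : ∀ x ∈ ω', x ∈ P' := fun x hx => htf' ▸ List.mem_toFinset.mpr hx
        obtain ⟨ω, hωP, hmap⟩ := exists_preimage_list hP' ω' hω'P
        have hnd : ω.Nodup := by
          have h2 : (ω.map σ).Nodup := by rw [hmap]; exact hnd'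
          exact h2.of_map
        have hω'len : ω'.length = k := by
          rw [← List.toFinset_card_of_nodup hnd', htf', hP'card]
        have hωlen : ω.length = k := by rw [← hω'len, ← hmap, List.length_map]
        have htf : ω.toFinset = P := by
          refine Finset.eq_of_subset_of_card_le ?_ ?_
          · intro x hx
            exact hωP x (List.mem_toFinset.mp hx)
          · rw [hk, ← hωlen, List.toFinset_card_of_nodup hnd]
        have hne' : ω' ≠ [] := by
          intro h
          rw [h] at hω'len
          simp at hω'len
          omega
        have hg' := goodD_of_mem_adm hne' hω'
        have hg := goodD_backward hP hk1 hNpos hNP hσbij hσmono hP' hmap hωP hωlen hg'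
        exact ⟨ω, mem_adm_of_goodD hP hnd htf hg, hmap⟩
    rw [← hbij.image_eq, Set.ncard_image_of_injOn hbij.injOn]
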